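/- For any finite connected simple graph G = (V,E), there exists a set P = {{f_1,g_1},…,{f_m,g_m}} of pairs of edges of G such that for each i the edges f_i and g_i share a vertex, the edges f_1, g_1, …, f_m, g_m are pairwise distinct, and m = ⌊|E|/2⌋; i.e., P covers all edges of G when |E| is even and all edges but one when |E| is odd. -/

import Mathlib

section AuxEdgePairing

-- pairUp + lemmas (already verified)
def pairUp {α : Type*} : List α → List (α × α) × Option α
  | [] => ([], none)
  | [a] => ([], some a)
  | a :: b :: t => let r := pairUp t; ((a, b) :: r.1, r.2)

theorem pairUp_perm {α : Type*} : ∀ l : List α,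
    ((pairUp l).1.map Prod.fst ++ (pairUp l).1.map Prod.snd ++ (pairUp l).2.toList).Perm l := by
  intro l
  classical
  induction l using pairUp.induct with
  | case1 => simp [pairUp]
  | case2 a => simp [pairUp]
  | case3 a b t ih =>
    simp only [pairUp, List.map_cons, List.cons_append]
    rw [List.perm_iff_count] at ih ⊢
    intro c
    have := ih c
    simp [List.count_append, List.count_cons] at this ⊢
    omega

theorem pairUp_mem {α : Type*} (l : List α) (p : α × α) (hp : p ∈ (pairUp l).1) :
    p.1 ∈ l ∧ p.2 ∈ l := by
  constructor
  · exact (pairUp_perm l).subset (List.mem_append_left _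
      (List.mem_append_left _ (List.mem_map_of_mem (f := Prod.fst) hp)))
  · exact (pairUp_perm l).subset (List.mem_append_left _
      (List.mem_append_right _ (List.mem_map_of_mem (f := Prod.snd) hp)))

theorem pairUp_rest_none {α : Type*} (l : List α) (h : Even l.length) :
    (pairUp l).2 = none := by
  have := (pairUp_perm l).length_eq
  simp only [List.length_append, List.length_map] at this
  rcases h with ⟨k, hk⟩
  cases hrest : (pairUp l).2 with
  | none => rfl
  | some a => rw [hrest] at this; simp at this; omega

theorem pairup_finset {α : Type*} [DecidableEq α] (F : Finset α) :
    ∃ (l : List (α × α)) (R : Finset α),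
      (∀ p ∈ l, p.1 ∈ F ∧ p.2 ∈ F) ∧
      (l.map Prod.fst ++ l.map Prod.snd).Nodup ∧
      R ⊆ F ∧ R.card ≤ 1 ∧
      (l.map Prod.fst ++ l.map Prod.snd).toFinset = F \ R ∧
      (Even F.card → R = ∅) := by
  have hnd0 : F.toList.Nodup := F.nodup_toList
  have hperm := pairUp_perm F.toList
  set l := (pairUp F.toList).1 with hl
  set rest := (pairUp F.toList).2 with hrest
  set items := l.map Prod.fst ++ l.map Prod.snd with hitems
  have hperm' : (items ++ rest.toList).Perm F.toList := hperm
  have hndall : (items ++ rest.toList).Nodup := hperm'.nodup_iff.2 hnd0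
  obtain ⟨hnditems, hndrest, hdisj⟩ := List.nodup_append.1 hndall
  refine ⟨l, rest.toList.toFinset, ?_, hnditems, ?_, ?_, ?_, ?_⟩
  · intro p hp
    have := pairUp_mem F.toList p hp
    exact ⟨Finset.mem_toList.1 this.1, Finset.mem_toList.1 this.2⟩
  · intro e he
    rw [List.mem_toFinset] at he
    exact Finset.mem_toList.1 (hperm'.subset (List.mem_append_right _ he))
  · cases h : rest with
    | none => simp
    | some a => simp
  · ext e
    simp only [List.mem_toFinset, Finset.mem_sdiff]
    constructor
    · intro he
      refine ⟨Finset.mem_toList.1 (hperm'.subset (List.mem_append_left _ he)), ?_⟩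
      exact fun hr => hdisj e he e hr rfl
    · rintro ⟨heF, heR⟩
      rcases List.mem_append.1 (hperm'.mem_iff.2 (Finset.mem_toList.2 heF)) with h | h
      · exact h
      · exact absurd h heR
  · intro hev
    have : rest = none := pairUp_rest_none F.toList (by rwa [Finset.length_toList])
    rw [this]; simp

theorem items_combine {α : Type*} [DecidableEq α] (l1 l2 : List (α × α))
    (h1 : (l1.map Prod.fst ++ l1.map Prod.snd).Nodup)
    (h2 : (l2.map Prod.fst ++ l2.map Prod.snd).Nodup)
    (hd : List.Disjoint (l1.map Prod.fst ++ l1.map Prod.snd)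
      (l2.map Prod.fst ++ l2.map Prod.snd)) :
    ((l1 ++ l2).map Prod.fst ++ (l1 ++ l2).map Prod.snd).Nodup ∧
    ((l1 ++ l2).map Prod.fst ++ (l1 ++ l2).map Prod.snd).toFinset
      = (l1.map Prod.fst ++ l1.map Prod.snd).toFinset ∪
        (l2.map Prod.fst ++ l2.map Prod.snd).toFinset := by
  have hperm : ((l1 ++ l2).map Prod.fst ++ (l1 ++ l2).map Prod.snd).Perm
      ((l1.map Prod.fst ++ l1.map Prod.snd) ++ (l2.map Prod.fst ++ l2.map Prod.snd)) := by
    rw [List.perm_iff_count]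
    intro a
    simp [List.count_append]
    ring
  constructor
  · exact hperm.nodup_iff.2 (List.nodup_append.2 ⟨h1, h2, fun a ha b hb hab => by subst hab; exact hd ha hb⟩)
  · rw [List.toFinset_eq_of_perm _ _ hperm, List.toFinset_append]

theorem sdiff_union_helper {α : Type*} [DecidableEq α] {F A R : Finset α}
    (hA : A ⊆ F) (hR : R ⊆ F \ A) : A ∪ ((F \ A) \ R) = F \ R := by
  ext e
  have h1 := @hA e
  have h2 := @hR e
  simp only [Finset.mem_union, Finset.mem_sdiff] at *
  tauto

variable {V : Type*} [Fintype V] [DecidableEq V] (G : SimpleGraph V)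

def Conn (S : Finset V) (x : V) : Prop :=
  ∀ w ∈ S, ∃ p : G.Walk x w, ∀ y ∈ p.support, y ∈ S

theorem exists_removable (S : Finset V) (x : V) (hx : x ∈ S) (hc : Conn G S x)
    (h2 : 2 ≤ S.card) :
    ∃ v ∈ S, v ≠ x ∧ (∃ u ∈ S, u ≠ v ∧ G.Adj v u) ∧ Conn G (S.erase v) x := by
  classical
  set Q : V → ℕ → Prop := fun w n => ∃ p : G.Walk x w, p.length = n ∧ ∀ y ∈ p.support, y ∈ S
    with hQ
  have hex : ∀ w ∈ S, ∃ n, Q w n := fun w hw => by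
    obtain ⟨p, hp⟩ := hc w hw; exact ⟨p.length, p, rfl, hp⟩
  set d : V → ℕ := fun w => if h : ∃ n, Q w n then Nat.find h else 0 with hd
  have hspec : ∀ w ∈ S, ∃ p : G.Walk x w, p.length = d w ∧ ∀ y ∈ p.support, y ∈ S := by
    intro w hw
    have h := hex w hw
    have := Nat.find_spec h
    obtain ⟨p, hp1, hp2⟩ := this
    exact ⟨p, by rw [hd]; simp [h, hp1], hp2⟩
  have hmin : ∀ w ∈ S, ∀ q : G.Walk x w, (∀ y ∈ q.support, y ∈ S) → d w ≤ q.length := by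
    intro w hw q hq
    have h := hex w hw
    rw [hd]; simp only [h, dif_pos]
    exact Nat.find_min' h ⟨q, rfl, hq⟩
  have hdx : d x = 0 := by
    have := hmin x hx (SimpleGraph.Walk.nil) (by simp [hx])
    simpa using this
  have hne : (S.erase x).Nonempty := by
    rw [← Finset.card_pos, Finset.card_erase_of_mem hx]; omega
  obtain ⟨v, hv, hvmax⟩ := Finset.exists_max_image (S.erase x) d hne
  have hvS : v ∈ S := Finset.mem_of_mem_erase hv
  have hvx : v ≠ x := Finset.ne_of_mem_erase hv
  refine ⟨v, hvS, hvx, ?_, ?_⟩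
  · -- neighbor
    obtain ⟨p, hpl, hps⟩ := hspec v hvS
    obtain ⟨u, h, q, hq⟩ := SimpleGraph.Walk.exists_eq_cons_of_ne hvx p.reverse
    refine ⟨u, ?_, h.ne', h⟩
    have : u ∈ p.reverse.support := by rw [hq]; simp
    rw [SimpleGraph.Walk.support_reverse, List.mem_reverse] at this
    exact hps u this
  · -- connectivity after erasing v
    intro w hw
    have hwS : w ∈ S := Finset.mem_of_mem_erase hw
    have hwv : w ≠ v := Finset.ne_of_mem_erase hw
    obtain ⟨p, hpl, hps⟩ := hspec w hwS
    refine ⟨p, ?_⟩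
    have hvsup : v ∉ p.support := by
      intro hvp
      have hsplit := p.take_spec hvp
      have hlen : (p.takeUntil v hvp).length + (p.dropUntil v hvp).length = p.length := by
        conv_rhs => rw [← hsplit]
        rw [SimpleGraph.Walk.length_append]
      have h1 : d v ≤ (p.takeUntil v hvp).length :=
        hmin v hvS _ (fun y hy => hps y (SimpleGraph.Walk.support_takeUntil_subset _ _ hy))
      have h2 : 1 ≤ (p.dropUntil v hvp).length := by
        by_contra h
        push_neg at h
        have : (p.dropUntil v hvp).length = 0 := by omega
        exact hwv ((p.dropUntil v hvp).eq_of_length_eq_zero this).symm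
      rcases eq_or_ne w x with rfl | hwx
      · rw [hdx] at hpl; omega
      · have : d w ≤ d v := hvmax w (Finset.mem_erase.2 ⟨hwx, hwS⟩)
        omega
    intro y hy
    exact Finset.mem_erase.2 ⟨fun h => hvsup (h ▸ hy), hps y hy⟩

variable [DecidableRel G.Adj]

open scoped Classical in
noncomputable def ES (S : Finset V) : Finset (Sym2 V) :=
  G.edgeFinset.filter (fun e => ∀ y ∈ e, y ∈ S)

theorem ES_erase (S : Finset V) (v : V) :
    ES G (S.erase v) = (ES G S).filter (fun e => v ∉ e) := by
  classical
  ext e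
  simp only [ES, Finset.mem_filter]
  constructor
  · rintro ⟨he, hall⟩
    refine ⟨⟨he, fun y hy => Finset.mem_of_mem_erase (hall y hy)⟩, fun hv => ?_⟩
    exact Finset.notMem_erase v S (hall v hv)
  · rintro ⟨⟨he, hall⟩, hv⟩
    exact ⟨he, fun y hy => Finset.mem_erase.2 ⟨fun h => hv (h ▸ hy), hall y hy⟩⟩

theorem master (n : ℕ) : ∀ (S : Finset V) (x : V), S.card = n → x ∈ S → Conn G S x →
    ∀ P : Finset (Sym2 V),
      (∀ e ∈ P, e ∈ G.edgeFinset ∧ (∃ a ∈ e, a ∈ S) ∧ (∃ b ∈ e, b ∉ S)) →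
    ∃ (l : List (Sym2 V × Sym2 V)) (R : Finset (Sym2 V)),
      (∀ p ∈ l, ∃ w, w ∈ p.1 ∧ w ∈ p.2) ∧
      (l.map Prod.fst ++ l.map Prod.snd).Nodup ∧
      R ⊆ ES G S ∪ P ∧ R.card ≤ 1 ∧ (∀ e ∈ R, x ∈ e) ∧
      (l.map Prod.fst ++ l.map Prod.snd).toFinset = (ES G S ∪ P) \ R := by
  classical
  induction n with
  | zero =>
    intro S x hcard hx
    exact absurd hcard (by have := Finset.card_pos.2 ⟨x, hx⟩; omega)
  | succ n ih =>
    intro S x hcard hx hconn P hP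
    rcases Nat.eq_zero_or_pos n with rfl | hn
    · -- base case : S = {x}
      have hS : S = {x} := by
        obtain ⟨a, ha⟩ := Finset.card_eq_one.1 hcard
        rw [ha] at hx ⊢
        rw [Finset.mem_singleton.1 hx]
      subst hS
      have hES : ES G {x} ∪ P = P := by
        suffices h : ES G {x} = ∅ by rw [h]; simp
        ext e
        simp only [ES, Finset.mem_filter, Finset.notMem_empty, iff_false, not_and]
        intro he hall
        have hnd : ¬ e.IsDiag := by
          rw [SimpleGraph.mem_edgeFinset] at he
          exact G.not_isDiag_of_mem_edgeSet he
        obtain ⟨a, b⟩ := e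
        have ha := Finset.mem_singleton.1 (hall a (by simp))
        have hb := Finset.mem_singleton.1 (hall b (by simp))
        exact hnd (by rw [ha, hb]; exact Sym2.isDiag_iff_proj_eq |>.2 rfl)
      have hPx : ∀ e ∈ P, x ∈ e := by
        intro e he
        obtain ⟨-, ⟨a, hae, haS⟩, -⟩ := hP e he
        rwa [Finset.mem_singleton.1 haS] at hae
      obtain ⟨l, R, hmem, hnd, hRsub, hRcard, hts, -⟩ := pairup_finset P
      refine ⟨l, R, ?_, hnd, ?_, hRcard, ?_, ?_⟩
      · intro p hp
        exact ⟨x, hPx _ (hmem p hp).1, hPx _ (hmem p hp).2⟩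
      · rw [hES]; exact hRsub
      · intro e he; exact hPx e (hRsub he)
      · rw [hES]; exact hts
    · -- inductive step
      obtain ⟨v, hvS, hvx, ⟨u, huS, huv, hadj⟩, hconn'⟩ :=
        exists_removable G S x hx hconn (by omega)
      have hxS' : x ∈ S.erase v := Finset.mem_erase.2 ⟨Ne.symm hvx, hx⟩
      have hcard' : (S.erase v).card = n := by
        rw [Finset.card_erase_of_mem hvS, hcard]; rfl
      set F := ES G S ∪ P with hF
      set B := F.filter (fun e => v ∈ e) with hB
      have hBv : ∀ e ∈ B, v ∈ e := fun e he => (Finset.mem_filter.1 he).2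
      have hBF : B ⊆ F := Finset.filter_subset _ _
      have hsvuE : s(v, u) ∈ ES G S := by
        simp only [ES, Finset.mem_filter, SimpleGraph.mem_edgeFinset]
        refine ⟨G.mem_edgeSet.mpr hadj, ?_⟩
        intro y hy
        rcases Sym2.mem_iff.1 hy with rfl | rfl
        · exact hvS
        · exact huS
      have hsvuB : s(v, u) ∈ B := by
        rw [hB, Finset.mem_filter]
        exact ⟨Finset.mem_union_left _ hsvuE, Sym2.mem_iff.2 (Or.inl rfl)⟩
      set P0 := P.filter (fun e => v ∉ e) with hP0
      have hid : ES G (S.erase v) ∪ P0 = F \ B := by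
        rw [ES_erase, hP0, ← Finset.filter_union, hB, ← Finset.filter_not]
      have hP0phantom : ∀ e ∈ P0, e ∈ G.edgeFinset ∧
          (∃ a ∈ e, a ∈ S.erase v) ∧ (∃ b ∈ e, b ∉ S.erase v) := by
        intro e he
        rw [hP0, Finset.mem_filter] at he
        obtain ⟨heP, hev⟩ := he
        obtain ⟨hE, ⟨a, hae, haS⟩, ⟨b, hbe, hbS⟩⟩ := hP e heP
        exact ⟨hE, ⟨a, hae, Finset.mem_erase.2 ⟨fun h => hev (h ▸ hae), haS⟩⟩,
          ⟨b, hbe, fun h => hbS (Finset.mem_of_mem_erase h)⟩⟩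
      by_cases hpar : Even B.card
      · -- even bucket
        obtain ⟨l1, R1, hmem1, hnd1, -, -, hts1, hR1⟩ := pairup_finset B
        rw [hR1 hpar, Finset.sdiff_empty] at hts1
        obtain ⟨l2, R, hadj2, hnd2, hRsub, hRcard, hRx, hts2⟩ :=
          ih (S.erase v) x hcard' hxS' hconn' P0 hP0phantom
        rw [hid] at hRsub hts2
        have hdisj : List.Disjoint (l1.map Prod.fst ++ l1.map Prod.snd)
            (l2.map Prod.fst ++ l2.map Prod.snd) := by
          intro e he1 he2
          have h1 : e ∈ B := by rw [← hts1]; exact List.mem_toFinset.2 he1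
          have h2 : e ∈ (F \ B) \ R := by rw [← hts2]; exact List.mem_toFinset.2 he2
          exact (Finset.mem_sdiff.1 (Finset.mem_sdiff.1 h2).1).2 h1
        obtain ⟨hndc, htsc⟩ := items_combine l1 l2 hnd1 hnd2 hdisj
        refine ⟨l1 ++ l2, R, ?_, hndc, ?_, hRcard, hRx, ?_⟩
        · intro p hp
          rcases List.mem_append.1 hp with hp | hp
          · exact ⟨v, hBv _ (hmem1 p hp).1, hBv _ (hmem1 p hp).2⟩
          · exact hadj2 p hp
        · exact hRsub.trans ((Finset.sdiff_subset).trans (le_refl F))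
        · rw [htsc, hts1, hts2]
          exact sdiff_union_helper hBF hRsub
      · -- odd bucket
        set B' := B.erase s(v, u) with hB'
        have hB'card : Even B'.card := by
          rw [hB', Finset.card_erase_of_mem hsvuB]
          have h1 : 1 ≤ B.card := Finset.card_pos.2 ⟨_, hsvuB⟩
          rw [Nat.even_iff] at hpar ⊢
          omega
        have hB'F : B' ⊆ F := (Finset.erase_subset _ _).trans hBF
        obtain ⟨l1, R1, hmem1, hnd1, -, -, hts1, hR1⟩ := pairup_finset B'
        rw [hR1 hB'card, Finset.sdiff_empty] at hts1
        set P1 := insert s(v, u) P0 with hP1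
        have hP1phantom : ∀ e ∈ P1, e ∈ G.edgeFinset ∧
            (∃ a ∈ e, a ∈ S.erase v) ∧ (∃ b ∈ e, b ∉ S.erase v) := by
          intro e he
          rcases Finset.mem_insert.1 he with rfl | he
          · refine ⟨SimpleGraph.mem_edgeFinset.2 (G.mem_edgeSet.mpr hadj), ?_, ?_⟩
            · exact ⟨u, Sym2.mem_iff.2 (Or.inr rfl),
                Finset.mem_erase.2 ⟨fun h => huv h, huS⟩⟩
            · exact ⟨v, Sym2.mem_iff.2 (Or.inl rfl), Finset.notMem_erase v S⟩
          · exact hP0phantom e he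
        have hid2 : ES G (S.erase v) ∪ P1 = F \ B' := by
          rw [hP1, Finset.union_insert, hid]
          ext e
          have hsF : s(v, u) ∈ F := hBF hsvuB
          simp only [Finset.mem_insert, Finset.mem_sdiff, hB', Finset.mem_erase]
          constructor
          · rintro (rfl | ⟨heF, heB⟩)
            · exact ⟨hsF, fun h => h.1 rfl⟩
            · exact ⟨heF, fun h => heB h.2⟩
          · rintro ⟨heF, h⟩
            by_cases hes : e = s(v, u)
            · exact Or.inl hes
            · exact Or.inr ⟨heF, fun hB0 => h ⟨hes, hB0⟩⟩
        obtain ⟨l2, R, hadj2, hnd2, hRsub, hRcard, hRx, hts2⟩ :=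
          ih (S.erase v) x hcard' hxS' hconn' P1 hP1phantom
        rw [hid2] at hRsub hts2
        have hdisj : List.Disjoint (l1.map Prod.fst ++ l1.map Prod.snd)
            (l2.map Prod.fst ++ l2.map Prod.snd) := by
          intro e he1 he2
          have h1 : e ∈ B' := by rw [← hts1]; exact List.mem_toFinset.2 he1
          have h2 : e ∈ (F \ B') \ R := by rw [← hts2]; exact List.mem_toFinset.2 he2
          exact (Finset.mem_sdiff.1 (Finset.mem_sdiff.1 h2).1).2 h1
        obtain ⟨hndc, htsc⟩ := items_combine l1 l2 hnd1 hnd2 hdisj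
        refine ⟨l1 ++ l2, R, ?_, hndc, ?_, hRcard, hRx, ?_⟩
        · intro p hp
          rcases List.mem_append.1 hp with hp | hp
          · exact ⟨v, hBv _ (Finset.mem_of_mem_erase (hmem1 p hp).1),
              hBv _ (Finset.mem_of_mem_erase (hmem1 p hp).2)⟩
          · exact hadj2 p hp
        · exact hRsub.trans (Finset.sdiff_subset)
        · rw [htsc, hts1, hts2]
          exact sdiff_union_helper hB'F hRsub

theorem connected_graph_adjacent_edge_pairing' (hG : G.Connected) :
    ∃ f g : Fin (G.edgeFinset.card / 2) → Sym2 V,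
      (∀ i, f i ∈ G.edgeFinset) ∧ (∀ i, g i ∈ G.edgeFinset) ∧
      (∀ i, ∃ v : V, v ∈ f i ∧ v ∈ g i) ∧
      Function.Injective (Sum.elim f g) := by
  classical
  obtain ⟨x⟩ := hG.nonempty
  have hconn : Conn G Finset.univ x := by
    intro w _
    obtain ⟨p⟩ := hG.preconnected x w
    exact ⟨p, fun y _ => Finset.mem_univ y⟩
  obtain ⟨l, R, hadjp, hnd, hRsub, hRc, hRx, hts⟩ :=
    master G (Fintype.card V) Finset.univ x Finset.card_univ (Finset.mem_univ x) hconn ∅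
      (by simp)
  have hESu : ES G Finset.univ ∪ ∅ = G.edgeFinset := by
    rw [Finset.union_empty]
    simp only [ES]
    exact Finset.filter_true_of_mem (fun e _ => fun y _ => Finset.mem_univ y)
  rw [hESu] at hRsub hts
  have h1 : (l.map Prod.fst ++ l.map Prod.snd).toFinset.card = l.length + l.length := by
    rw [List.toFinset_card_of_nodup hnd]; simp
  have h2 : (G.edgeFinset \ R).card = G.edgeFinset.card - R.card := Finset.card_sdiff_of_subset hRsub
  have h3 : R.card ≤ G.edgeFinset.card := Finset.card_le_card hRsub
  rw [hts, h2] at h1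
  have hL : l.length = G.edgeFinset.card / 2 := by omega
  have hcast : G.edgeFinset.card / 2 = l.length := hL.symm
  have hinE : ∀ e ∈ (l.map Prod.fst ++ l.map Prod.snd), e ∈ G.edgeFinset := by
    intro e he
    have := List.mem_toFinset.2 he
    rw [hts] at this
    exact (Finset.mem_sdiff.1 this).1
  refine ⟨fun i => (l.get (Fin.cast hcast i)).1, fun i => (l.get (Fin.cast hcast i)).2,
    ?_, ?_, ?_, ?_⟩
  · intro i
    exact hinE _ (List.mem_append_left _
      (List.mem_map_of_mem (f := Prod.fst) (l.get_mem _)))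
  · intro i
    exact hinE _ (List.mem_append_right _
      (List.mem_map_of_mem (f := Prod.snd) (l.get_mem _)))
  · intro i
    exact hadjp _ (l.get_mem _)
  · obtain ⟨hndf, hnds, hdisj⟩ := List.nodup_append.1 hnd
    intro a b hab
    have key : ∀ (i j : Fin l.length), (l.get i).1 = (l.get j).1 → i = j := by
      intro i j hij
      have : (l.map Prod.fst).get (Fin.cast (by simp) i)
          = (l.map Prod.fst).get (Fin.cast (by simp) j) := by
        simp only [List.get_eq_getElem, List.getElem_map, Fin.coe_cast]
        exact hij
      have h' := hndf.get_inj_iff.1 this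
      exact Fin.ext (by simpa using congrArg Fin.val h')
    have key2 : ∀ (i j : Fin l.length), (l.get i).2 = (l.get j).2 → i = j := by
      intro i j hij
      have : (l.map Prod.snd).get (Fin.cast (by simp) i)
          = (l.map Prod.snd).get (Fin.cast (by simp) j) := by
        simp only [List.get_eq_getElem, List.getElem_map, Fin.coe_cast]
        exact hij
      have h' := hnds.get_inj_iff.1 this
      exact Fin.ext (by simpa using congrArg Fin.val h')
    have keyd : ∀ (i j : Fin l.length), (l.get i).1 ≠ (l.get j).2 := by
      intro i j hij
      exact hdisj _ (List.mem_map_of_mem (f := Prod.fst) (l.get_mem _))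
        _ (List.mem_map_of_mem (f := Prod.snd) (l.get_mem _)) hij
    cases a with
    | inl i =>
      cases b with
      | inl j =>
        simp only [Sum.elim_inl] at hab
        have := key _ _ hab
        have : (Fin.cast hcast i) = (Fin.cast hcast j) := this
        simpa [Fin.ext_iff] using this
      | inr j =>
        simp only [Sum.elim_inl, Sum.elim_inr] at hab
        exact absurd hab (keyd _ _)
    | inr i =>
      cases b with
      | inl j =>
        simp only [Sum.elim_inl, Sum.elim_inr] at hab
        exact absurd hab.symm (keyd _ _)
      | inr j =>
        simp only [Sum.elim_inr] at hab
        have := key2 _ _ hab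
        have : (Fin.cast hcast i) = (Fin.cast hcast j) := this
        simpa [Fin.ext_iff] using this

end AuxEdgePairing

/-- **Edge covering for connected graphs**: every finite connected simple graph `G = (V,E)`
admits `⌊|E|/2⌋` pairs `{f_i, g_i}` of adjacent edges (each pair sharing a vertex), with all
the edges `f_1, g_1, …, f_m, g_m` pairwise distinct; thus all edges are covered when `|E|` is
even, and all but one when `|E|` is odd. -/
theorem connected_graph_adjacent_edge_pairing {V : Type*} [Fintype V] [DecidableEq V]
    (G : SimpleGraph V) [DecidableRel G.Adj] (hG : G.Connected) :
    ∃ f g : Fin (G.edgeFinset.card / 2) → Sym2 V,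
      (∀ i, f i ∈ G.edgeFinset) ∧ (∀ i, g i ∈ G.edgeFinset) ∧
      (∀ i, ∃ v : V, v ∈ f i ∧ v ∈ g i) ∧
      Function.Injective (Sum.elim f g) :=
  connected_graph_adjacent_edge_pairing' G hG
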